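/- Let p = (z₁, z₂, w) ∈ ℂ³ with z₂ ≠ 0, z₁ ≠ 0, satisfy that w z₁ conj(z₂) is real and w z₁ conj(z₂) ≥ |z₁ z₂|². Let λ > 0 satisfy λ² = w z₁ / z₂ (which is then a positive real). Then the map φ(ζ) = (λζ, wζ/λ, w) is an analytic disc attached to M = {(ξ₁, ξ₂, ω) ∈ ℂ³ : ω = conj(ξ₁) ξ₂}, |z₁| ≤ λ, and φ(z₁/λ) = p. -/

import Mathlib

open Metric Complex

theorem disc_attached_first_step
    (z₁ z₂ w : ℂ) (hz₁ : z₁ ≠ 0) (hz₂ : z₂ ≠ 0)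
    (hre : (w * z₁ * (starRingEnd ℂ) z₂).im = 0)
    (hge : ‖z₁ * z₂‖ ^ 2 ≤ (w * z₁ * (starRingEnd ℂ) z₂).re)
    (l : ℝ) (hl : 0 < l) (hl2 : ((l : ℂ)) ^ 2 = w * z₁ / z₂) :
    (ContinuousOn (fun ζ : ℂ => ((l : ℂ) * ζ, w * ζ / (l : ℂ), w))
        (closedBall (0 : ℂ) 1)) ∧
      (DifferentiableOn ℂ (fun ζ : ℂ => ((l : ℂ) * ζ, w * ζ / (l : ℂ), w))
        (ball (0 : ℂ) 1)) ∧
      (∀ ζ ∈ sphere (0 : ℂ) 1,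
        w = (starRingEnd ℂ) ((l : ℂ) * ζ) * (w * ζ / (l : ℂ))) ∧
      ‖z₁‖ ≤ l ∧
      (z₁ / (l : ℂ) ∈ closedBall (0 : ℂ) 1) ∧
      (((l : ℂ) * (z₁ / (l : ℂ)), w * (z₁ / (l : ℂ)) / (l : ℂ), w) = (z₁, z₂, w)) := by
  have hl0 : (l : ℂ) ≠ 0 := by
    exact_mod_cast (ne_of_gt hl)
  have hmul : w * z₁ = (l : ℂ) ^ 2 * z₂ := by
    field_simp at hl2
    linear_combination -hl2
  have key : w * z₁ * (starRingEnd ℂ) z₂ = ((l ^ 2 * Complex.normSq z₂ : ℝ) : ℂ) := by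
    rw [hmul, mul_assoc, Complex.mul_conj]
    push_cast
    ring
  have hnorm : ‖z₁‖ ≤ l := by
    have h2 : ‖z₁‖ ^ 2 * ‖z₂‖ ^ 2 ≤ l ^ 2 * ‖z₂‖ ^ 2 := by
      have := hge
      rw [key] at this
      simp only [Complex.ofReal_re] at this
      rw [Complex.normSq_eq_norm_sq] at this
      simpa [norm_mul, mul_pow] using this
    have hz2 : (0:ℝ) < ‖z₂‖ ^ 2 := pow_pos (norm_pos_iff.mpr hz₂) 2
    have h3 : ‖z₁‖ ^ 2 ≤ l ^ 2 := le_of_mul_le_mul_right h2 hz2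
    nlinarith [norm_nonneg z₁]
  refine ⟨?_, ?_, ?_, hnorm, ?_, ?_⟩
  · fun_prop
  · fun_prop
  · intro ζ hζ
    have h1 : Complex.normSq ζ = 1 := by
      have : ‖ζ‖ = 1 := by simpa using hζ
      rw [Complex.normSq_eq_norm_sq, this]; norm_num
    have hc : (starRingEnd ℂ) ζ * ζ = 1 := by
      rw [mul_comm, Complex.mul_conj, h1]; norm_num
    simp only [map_mul, Complex.conj_ofReal]
    field_simp
    linear_combination -w * hc
  · have hln : ‖(l : ℂ)‖ = l := by
      rw [Complex.norm_real]; exact Real.norm_of_nonneg hl.le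
    simp only [mem_closedBall, dist_zero_right, norm_div, hln, div_le_one hl]
    exact hnorm
  · refine Prod.ext (by field_simp) (Prod.ext ?_ rfl)
    field_simp
    linear_combination hmul
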